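/- arXiv:1206.2536 — 2 statements merged into one kernel-verified Lean document; each statement's English description precedes it below -/
import Mathlib

section
/- For any CPTP map Φ on an N-dimensional system, the Shannon entropy of the normalized singular values of the superoperator satisfies S^rec(Φ) ≤ ((Λ−1)/Λ) ln((N²−1)/(Λ−1)) + ln Λ ≤ 2 ln N, where Λ is the trace norm of the superoperator. -/
open Matrix
open scoped BigOperators Kronecker ComplexOrder

noncomputable section

/-- Singular values of a square complex matrix: square roots of eigenvalues of `X * Xᴴ`. -/
def singularValues {n : Type*} [Fintype n] [DecidableEq n] (X : Matrix n n ℂ) : n → ℝ :=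
  fun i => Real.sqrt ((Matrix.posSemidef_self_mul_conjTranspose X).1.eigenvalues i)

/-- Shannon entropy of the normalization of a nonnegative vector. -/
def shannonH {ι : Type*} [Fintype ι] (v : ι → ℝ) : ℝ :=
  -∑ i, (v i / ∑ j, v j) * Real.log (v i / ∑ j, v j)

/-- Rényi entropy of order `q` of the normalization of a nonnegative vector. -/
def renyiH {ι : Type*} [Fintype ι] (q : ℝ) (v : ι → ℝ) : ℝ :=
  (1 / (1 - q)) * Real.log (∑ i, (v i / ∑ j, v j) ^ q)

/-- Unnormalized (von Neumann–type) entropy of the singular value vector. -/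
def vnEntropy {n : Type*} [Fintype n] [DecidableEq n] (M : Matrix n n ℂ) : ℝ :=
  -∑ i, singularValues M i * Real.log (singularValues M i)

/-- A quantum channel: completely positive (Kraus form) and trace preserving. -/
def IsCPTP {N : ℕ} (Φ : Matrix (Fin N) (Fin N) ℂ →ₗ[ℂ] Matrix (Fin N) (Fin N) ℂ) : Prop :=
  ∃ (k : ℕ) (A : Fin k → Matrix (Fin N) (Fin N) ℂ),
    (∀ ρ, Φ ρ = ∑ i, A i * ρ * (A i)ᴴ) ∧ (∑ i, (A i)ᴴ * A i = 1)

/-- Density matrix predicate. -/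
def IsDensityMatrix {n : Type*} [Fintype n] [DecidableEq n] (ρ : Matrix n n ℂ) : Prop :=
  ρ.PosSemidef ∧ ρ.trace = 1

/-- The Choi (dynamical) matrix of a linear map on matrices. -/
def choiMatrix {N : ℕ} (Φ : Matrix (Fin N) (Fin N) ℂ →ₗ[ℂ] Matrix (Fin N) (Fin N) ℂ) :
    Matrix (Fin N × Fin N) (Fin N × Fin N) ℂ :=
  fun p q => Φ (Matrix.single p.2 q.2 1) p.1 q.1

/-- The superoperator matrix of a linear map on matrices. -/
def superMatrix {N : ℕ} (Φ : Matrix (Fin N) (Fin N) ℂ →ₗ[ℂ] Matrix (Fin N) (Fin N) ℂ) :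
    Matrix (Fin N × Fin N) (Fin N × Fin N) ℂ :=
  fun p q => Φ (Matrix.single q.1 q.2 1) p.1 p.2

/-- Hilbert–Schmidt norm of a matrix. -/
def hsNorm {n : Type*} [Fintype n] [DecidableEq n] (M : Matrix n n ℂ) : ℝ :=
  Real.sqrt ((M * Mᴴ).trace.re)

/-- Largest singular value of the superoperator of `Φ`, as the operator norm w.r.t. HS norm. -/
def sigma1 {N : ℕ} (Φ : Matrix (Fin N) (Fin N) ℂ →ₗ[ℂ] Matrix (Fin N) (Fin N) ℂ) : ℝ :=
  sSup {r : ℝ | ∃ M : Matrix (Fin N) (Fin N) ℂ, hsNorm M = 1 ∧ r = hsNorm (Φ M)}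

/-- Sum of the (at most) `m` largest entries of a nonnegative vector. -/
def partialMax {ι : Type*} [Fintype ι] (v : ι → ℝ) (m : ℕ) : ℝ :=
  sSup {t : ℝ | ∃ s : Finset ι, s.card ≤ m ∧ t = ∑ i ∈ s, v i}

/-- `Majorizes w v` means `v ≺ w` (for nonnegative vectors, possibly of different lengths). -/
def Majorizes {ι κ : Type*} [Fintype ι] [Fintype κ] (w : ι → ℝ) (v : κ → ℝ) : Prop :=
  (∑ i, v i = ∑ i, w i) ∧ ∀ m : ℕ, partialMax v m ≤ partialMax w m



namespace ReceiverAux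
open Real

lemma gibbs {ι : Type*} [DecidableEq ι] (s : Finset ι) (p : ι → ℝ) (hp : ∀ i ∈ s, 0 ≤ p i) :
    ∑ i ∈ s, negMulLog (p i) ≤ -(∑ i ∈ s, p i) * log ((∑ i ∈ s, p i) / s.card) := by
  rcases s.eq_empty_or_nonempty with rfl | hne
  · simp
  have hm : (0:ℝ) < s.card := by exact_mod_cast hne.card_pos
  have hJ := Real.concaveOn_negMulLog.le_map_sum (t := s) (w := fun _ => (s.card : ℝ)⁻¹)
    (p := p) (fun i _ => by positivity) (by simp [Finset.sum_const]; field_simp) (fun i hi => hp i hi)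
  -- hJ : ∑ i in s, (card)⁻¹ • negMulLog (p i) ≤ negMulLog (∑ i in s, (card)⁻¹ • p i)
  have h2 : ∑ i ∈ s, (s.card : ℝ)⁻¹ • p i = (∑ i ∈ s, p i) / s.card := by
    rw [← Finset.smul_sum]; simp [div_eq_inv_mul]
  have h3 : ∑ i ∈ s, (s.card : ℝ)⁻¹ • negMulLog (p i)
      = (s.card : ℝ)⁻¹ * ∑ i ∈ s, negMulLog (p i) := by
    rw [← Finset.smul_sum]; simp
  rw [h2, h3] at hJ
  have := mul_le_mul_of_nonneg_left hJ (le_of_lt hm)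
  rw [← mul_assoc, mul_inv_cancel₀ (ne_of_gt hm), one_mul] at this
  calc ∑ i ∈ s, negMulLog (p i) ≤ (s.card:ℝ) * negMulLog ((∑ i ∈ s, p i) / s.card) := this
    _ = -(∑ i ∈ s, p i) * log ((∑ i ∈ s, p i) / s.card) := by
        rw [negMulLog]; field_simp

lemma h_hasDeriv {n x : ℝ} (hx0 : 0 < x) (h1x : 0 < 1 - x) :
    HasDerivAt (fun t => negMulLog t + negMulLog (1-t) + (1-t) * log (n-1))
      ((-log x - 1) + (log (1-x) + 1) + (-log (n-1))) x := by
  have hB : HasDerivAt (fun t : ℝ => negMulLog (1-t)) (log (1-x) + 1) x := by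
    have := (hasDerivAt_negMulLog (ne_of_gt h1x)).comp x ((hasDerivAt_id x).const_sub 1)
    exact this.congr_deriv (by ring)
  have hC : HasDerivAt (fun t : ℝ => (1-t) * log (n-1)) (-log (n-1)) x := by
    have := ((hasDerivAt_id x).const_sub 1).mul_const (log (n-1))
    exact this.congr_deriv (by ring)
  exact ((hasDerivAt_negMulLog (ne_of_gt hx0)).add hB).add hC

lemma h_antitone {n : ℝ} (hn : 2 ≤ n) :
    AntitoneOn (fun t => negMulLog t + negMulLog (1-t) + (1-t) * log (n-1))
      (Set.Icc (1/n) 1) := by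
  have hn0 : (0:ℝ) < n := by linarith
  have hn1 : (0:ℝ) < n - 1 := by linarith
  apply antitoneOn_of_deriv_nonpos (convex_Icc _ _)
  · fun_prop
  · rw [interior_Icc]
    intro x hx
    obtain ⟨hx1, hx2⟩ := hx
    have hx0 : 0 < x := lt_trans (by positivity) hx1
    have h1x : 0 < 1 - x := by linarith
    exact (h_hasDeriv hx0 h1x).differentiableAt.differentiableWithinAt
  · rw [interior_Icc]
    intro x hx
    obtain ⟨hx1, hx2⟩ := hx
    have hx0 : 0 < x := lt_trans (by positivity) hx1
    have h1x : 0 < 1 - x := by linarith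
    rw [(h_hasDeriv hx0 h1x).deriv]
    have hxn : 1 < x * n := by rwa [div_lt_iff₀ hn0] at hx1
    have hlog : log (1-x) ≤ log (x * (n-1)) := by
      apply Real.log_le_log h1x
      nlinarith
    rw [Real.log_mul (ne_of_gt hx0) (ne_of_gt hn1)] at hlog
    linarith

section
variable {n : ℝ}

private noncomputable def Ffun (n : ℝ) : ℝ → ℝ :=
  fun t => log (n-1) - log (n-1) * t⁻¹ + negMulLog (t-1) * t⁻¹ + log t

lemma Ffun_hasDeriv {x : ℝ} (hx1 : 1 < x) :
    HasDerivAt (Ffun n) ((log (n-1) - log (x-1)) * (x⁻¹)^2) x := by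
  have hx0 : (0:ℝ) < x := by linarith
  have hx10 : x - 1 ≠ 0 := by intro h; nlinarith [h]
  have hInv : HasDerivAt (fun t : ℝ => t⁻¹) (-((x⁻¹)^2)) x := by
    simpa [sq] using (hasDerivAt_inv (ne_of_gt hx0))
  have hA : HasDerivAt (fun t : ℝ => log (n-1) - log (n-1) * t⁻¹)
      (-(log (n-1) * (-((x⁻¹)^2)))) x := by
    simpa using ((hInv.const_mul (log (n-1))).const_sub (log (n-1)))
  have hnml : HasDerivAt (fun t : ℝ => negMulLog (t-1)) (-log (x-1) - 1) x := by
    have := (hasDerivAt_negMulLog hx10).comp x ((hasDerivAt_id x).sub_const 1)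
    exact this.congr_deriv (by ring)
  have hB : HasDerivAt (fun t : ℝ => negMulLog (t-1) * t⁻¹)
      ((-log (x-1) - 1) * x⁻¹ + negMulLog (x-1) * (-((x⁻¹)^2))) x := hnml.mul hInv
  have hC : HasDerivAt Real.log x⁻¹ x := Real.hasDerivAt_log (ne_of_gt hx0)
  have h := (hA.add hB).add hC
  refine h.congr_deriv ?_
  unfold negMulLog
  field_simp
  ring

lemma Ffun_monotone (hn : 2 ≤ n) : MonotoneOn (Ffun n) (Set.Icc 1 n) := by
  have hn1 : (0:ℝ) < n - 1 := by linarith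
  apply monotoneOn_of_deriv_nonneg (convex_Icc _ _)
  · apply ContinuousOn.add
    apply ContinuousOn.add
    apply ContinuousOn.sub continuousOn_const
    · exact continuousOn_const.mul (continuousOn_inv₀.mono (by
        intro x hx; simp at hx ⊢; intro h; rw [h] at hx; linarith [hx.1]))
    · exact ((continuous_negMulLog.comp (continuous_sub_right 1)).continuousOn).mul
        (continuousOn_inv₀.mono (by
          intro x hx; simp at hx ⊢; intro h; rw [h] at hx; linarith [hx.1]))
    · exact Real.continuousOn_log.mono (by
        intro x hx; simp at hx ⊢; intro h; rw [h] at hx; linarith [hx.1])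
  · rw [interior_Icc]
    intro x hx
    exact (Ffun_hasDeriv hx.1).differentiableAt.differentiableWithinAt
  · rw [interior_Icc]
    intro x hx
    rw [(Ffun_hasDeriv hx.1).deriv]
    have : log (x-1) ≤ log (n-1) := by
      exact Real.log_le_log (by linarith [hx.1]) (by linarith [hx.2])
    have h2 : (0:ℝ) ≤ (x⁻¹)^2 := sq_nonneg _
    nlinarith

lemma second_ineq {Λ : ℝ} (hn : 2 ≤ n) (h1 : 1 ≤ Λ) (h2 : Λ ≤ n) :
    (Λ-1)/Λ * log ((n-1)/(Λ-1)) + log Λ ≤ log n := by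
  have hn1 : (0:ℝ) < n - 1 := by linarith
  have hΛ0 : (0:ℝ) < Λ := by linarith
  have key1 : (Λ-1)/Λ * log ((n-1)/(Λ-1)) + log Λ = Ffun n Λ := by
    rcases eq_or_lt_of_le h1 with h | h
    · rw [← h]; simp [Ffun, negMulLog]
    · have hΛ1 : (0:ℝ) < Λ - 1 := by linarith
      rw [Real.log_div (ne_of_gt hn1) (ne_of_gt hΛ1), Ffun, negMulLog]
      field_simp
      ring
  have key2 : Ffun n n = log n := by
    have hn0 : n ≠ 0 := by linarith
    rw [Ffun, negMulLog]
    field_simp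
    ring
  rw [key1, ← key2]
  exact Ffun_monotone hn (Set.mem_Icc.2 ⟨h1, h2⟩) (Set.mem_Icc.2 ⟨by linarith, le_refl n⟩) h2
end

lemma entropy_bound {ι : Type*} [Fintype ι] [DecidableEq ι] (σ : ι → ℝ) (hσ : ∀ i, 0 ≤ σ i)
    (j : ι) (hj : 1 ≤ σ j) {n : ℝ} (hcard : (Fintype.card ι : ℝ) = n) (hn : 2 ≤ n)
    (hΛn : ∑ i, σ i ≤ n) :
    -∑ i, (σ i / ∑ k, σ k) * log (σ i / ∑ k, σ k)
      ≤ ((∑ i, σ i) - 1)/(∑ i, σ i) * log ((n-1)/((∑ i, σ i) - 1)) + log (∑ i, σ i) := by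
  have hn1 : (0:ℝ) < n - 1 := by linarith
  set Λ := ∑ i, σ i with hΛdef
  have hΛ1 : 1 ≤ Λ := hj.trans (Finset.single_le_sum (fun i _ => hσ i) (Finset.mem_univ j))
  have hΛ0 : (0:ℝ) < Λ := by linarith
  set p : ι → ℝ := fun i => σ i / Λ with hpdef
  have hp0 : ∀ i, 0 ≤ p i := fun i => div_nonneg (hσ i) (le_of_lt hΛ0)
  have hpsum : ∑ i, p i = 1 := by
    rw [hpdef, ← Finset.sum_div, ← hΛdef, div_self (ne_of_gt hΛ0)]
  have hpj1 : p j ≤ 1 := by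
    rw [← hpsum]
    exact Finset.single_le_sum (fun i _ => hp0 i) (Finset.mem_univ j)
  have hpjΛ : 1/Λ ≤ p j := by
    rw [hpdef]
    show 1/Λ ≤ σ j / Λ
    gcongr
  -- LHS as sum of negMulLog
  have hLHS : -∑ i, (σ i / ∑ k, σ k) * log (σ i / ∑ k, σ k) = ∑ i, negMulLog (p i) := by
    rw [← Finset.sum_neg_distrib]
    exact Finset.sum_congr rfl (fun i _ => by rw [negMulLog]; ring)
  rw [hLHS]
  -- split off j
  have hsplit : ∑ i, negMulLog (p i)
      = negMulLog (p j) + ∑ i ∈ Finset.univ.erase j, negMulLog (p i) := by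
    rw [add_comm, Finset.sum_erase_add _ _ (Finset.mem_univ j)]
  have herasesum : ∑ i ∈ Finset.univ.erase j, p i = 1 - p j := by
    have := Finset.sum_erase_add Finset.univ p (Finset.mem_univ j)
    linarith [hpsum, this]
  have hcard1 : 1 ≤ Fintype.card ι := Fintype.card_pos_iff.2 ⟨j⟩
  have herasecard : ((Finset.univ.erase j).card : ℝ) = n - 1 := by
    rw [Finset.card_erase_of_mem (Finset.mem_univ j)]
    rw [Nat.cast_sub (by simpa using hcard1)]
    simp [hcard]
  -- Gibbs step
  have hgibbs : ∑ i ∈ Finset.univ.erase j, negMulLog (p i)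
      ≤ -(1 - p j) * log ((1 - p j)/(n-1)) := by
    have := gibbs (Finset.univ.erase j) p (fun i _ => hp0 i)
    rwa [herasesum, herasecard] at this
  -- identity for the Gibbs RHS
  have hident : -(1 - p j) * log ((1 - p j)/(n-1))
      = negMulLog (1 - p j) + (1 - p j) * log (n-1) := by
    rcases eq_or_lt_of_le hpj1 with h | h
    · rw [← h]; simp
    · have h1p : (0:ℝ) < 1 - p j := by linarith
      rw [Real.log_div (ne_of_gt h1p) (ne_of_gt hn1), negMulLog]
      ring
  -- combine to h (p j)
  have hstep : ∑ i, negMulLog (p i)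
      ≤ negMulLog (p j) + negMulLog (1 - p j) + (1 - p j) * log (n-1) := by
    rw [hsplit]; rw [hident] at hgibbs; linarith
  -- antitone step
  have hmem1 : p j ∈ Set.Icc (1/n) 1 := by
    constructor
    · exact le_trans (one_div_le_one_div_of_le hΛ0 hΛn) hpjΛ
    · exact hpj1
  have hmem2 : (1/Λ) ∈ Set.Icc (1/n) 1 := by
    constructor
    · exact one_div_le_one_div_of_le hΛ0 hΛn
    · rw [div_le_one hΛ0]; linarith
  have hanti := h_antitone hn hmem2 hmem1 hpjΛ
  -- final identity h(1/Λ) = RHS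
  have hfinal : negMulLog (1/Λ) + negMulLog (1 - 1/Λ) + (1 - 1/Λ) * log (n-1)
      = (Λ - 1)/Λ * log ((n-1)/(Λ - 1)) + log Λ := by
    rcases eq_or_lt_of_le hΛ1 with h | h
    · rw [← h]; norm_num
    · have hΛ10 : (0:ℝ) < Λ - 1 := by linarith
      have e1 : 1 - 1/Λ = (Λ - 1)/Λ := by field_simp
      rw [e1, negMulLog, negMulLog, Real.log_div (ne_of_gt hΛ10) (ne_of_gt hΛ0),
        Real.log_div (ne_of_gt hn1) (ne_of_gt hΛ10), one_div, Real.log_inv]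
      field_simp
      ring
  calc ∑ i, negMulLog (p i)
      ≤ negMulLog (p j) + negMulLog (1 - p j) + (1 - p j) * log (n-1) := hstep
    _ ≤ negMulLog (1/Λ) + negMulLog (1 - 1/Λ) + (1 - 1/Λ) * log (n-1) := hanti
    _ = (Λ - 1)/Λ * log ((n-1)/(Λ - 1)) + log Λ := hfinal

end ReceiverAux

namespace ReceiverAux2
open Matrix

variable {n : Type*} [Fintype n] [DecidableEq n]

lemma sum_eig_eq_trace {A : Matrix n n ℂ} (hA : A.IsHermitian) :
    ((∑ i, hA.eigenvalues i : ℝ) : ℂ) = A.trace := by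
  conv_rhs => rw [hA.spectral_theorem, Unitary.conjStarAlgAut_apply]
  rw [Matrix.trace_mul_comm, ← mul_assoc,
    (Matrix.mem_unitaryGroup_iff').mp (hA.eigenvectorUnitary).2, one_mul, trace_diagonal]
  push_cast
  rfl

lemma sum_eig_sq_eq_trace {A : Matrix n n ℂ} (hA : A.IsHermitian) :
    ((∑ i, (hA.eigenvalues i)^2 : ℝ) : ℂ) = (A * A).trace := by
  have hD : A * A = (hA.eigenvectorUnitary : Matrix n n ℂ)
      * (diagonal ((↑) ∘ hA.eigenvalues) * diagonal ((↑) ∘ hA.eigenvalues))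
      * (star (hA.eigenvectorUnitary : Matrix n n ℂ)) := by
    conv_lhs => rw [hA.spectral_theorem]
    have hU : (star (hA.eigenvectorUnitary : Matrix n n ℂ))
        * (hA.eigenvectorUnitary : Matrix n n ℂ) = 1 :=
      (Matrix.mem_unitaryGroup_iff').mp (hA.eigenvectorUnitary).2
    -- (U D U*) (U D U*) = U (D D) U*
    calc ((hA.eigenvectorUnitary : Matrix n n ℂ) * diagonal ((↑) ∘ hA.eigenvalues)
          * (star (hA.eigenvectorUnitary : Matrix n n ℂ)))
        * ((hA.eigenvectorUnitary : Matrix n n ℂ) * diagonal ((↑) ∘ hA.eigenvalues)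
          * (star (hA.eigenvectorUnitary : Matrix n n ℂ)))
        = (hA.eigenvectorUnitary : Matrix n n ℂ) * (diagonal ((↑) ∘ hA.eigenvalues)
          * ((star (hA.eigenvectorUnitary : Matrix n n ℂ))
            * (hA.eigenvectorUnitary : Matrix n n ℂ)) * diagonal ((↑) ∘ hA.eigenvalues))
          * (star (hA.eigenvectorUnitary : Matrix n n ℂ)) := by
          simp only [mul_assoc]
      _ = _ := by rw [hU, mul_one]
  rw [hD, Matrix.trace_mul_comm, ← mul_assoc,
    (Matrix.mem_unitaryGroup_iff').mp (hA.eigenvectorUnitary).2, one_mul,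
    diagonal_mul_diagonal, trace_diagonal]
  push_cast
  simp [sq]

lemma trace_mul_conjTranspose_self (M : Matrix n n ℂ) :
    (M * Mᴴ).trace = ((∑ p, ∑ q, ‖M p q‖^2 : ℝ) : ℂ) := by
  rw [Matrix.trace]
  push_cast
  apply Finset.sum_congr rfl
  intro p _
  rw [Matrix.diag, Matrix.mul_apply]
  apply Finset.sum_congr rfl
  intro q _
  rw [conjTranspose_apply]
  simp [Complex.mul_conj, Complex.normSq_eq_norm_sq, Complex.ofReal_pow]


lemma exists_eig_ge {A : Matrix n n ℂ} (hA : A.IsHermitian) [Nonempty n] (v : n → ℂ)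
    (hv : star v ⬝ᵥ v = 1) : ∃ j, (star v ⬝ᵥ (A *ᵥ v)).re ≤ hA.eigenvalues j := by
  classical
  set U : Matrix n n ℂ := (hA.eigenvectorUnitary : Matrix n n ℂ) with hU
  set D : Matrix n n ℂ := diagonal (RCLike.ofReal ∘ hA.eigenvalues) with hDdef
  set w : n → ℂ := (star U) *ᵥ v with hw
  have hstarw : star w = star v ᵥ* U := by
    rw [hw, star_mulVec, star_eq_conjTranspose, conjTranspose_conjTranspose]
  have e2 : star w ⬝ᵥ w = 1 := by
    rw [hstarw, hw, ← dotProduct_mulVec, mulVec_mulVec,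
      (Matrix.mem_unitaryGroup_iff).mp (hA.eigenvectorUnitary).2, one_mulVec, hv]
  have e1 : star v ⬝ᵥ (A *ᵥ v) = star w ⬝ᵥ (D *ᵥ w) := by
    conv_lhs => rw [hA.spectral_theorem, Unitary.conjStarAlgAut_apply]
    rw [← hU, ← hDdef, ← mulVec_mulVec, ← mulVec_mulVec, dotProduct_mulVec, ← hstarw, hw]
  have e3 : (star w ⬝ᵥ (D *ᵥ w)).re = ∑ i, hA.eigenvalues i * ‖w i‖^2 := by
    rw [dotProduct, Complex.re_sum]
    apply Finset.sum_congr rfl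
    intro i _
    have : star w i * (D *ᵥ w) i = ((hA.eigenvalues i * ‖w i‖^2 : ℝ) : ℂ) := by
      rw [hDdef, mulVec_diagonal, Pi.star_apply]
      calc star (w i) * (((hA.eigenvalues i : ℂ)) * w i)
          = (hA.eigenvalues i : ℂ) * ((starRingEnd ℂ) (w i) * w i) := by
            rw [RCLike.star_def]; ring
        _ = _ := by
            rw [mul_comm ((starRingEnd ℂ) (w i)) (w i), Complex.mul_conj']
            push_cast
            ring
    rw [this, Complex.ofReal_re]
  have e4 : ∑ i, ‖w i‖^2 = 1 := by
    have : (star w ⬝ᵥ w).re = 1 := by rw [e2]; rfl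
    rw [dotProduct, Complex.re_sum] at this
    rw [← this]
    apply Finset.sum_congr rfl
    intro i _
    rw [Pi.star_apply, RCLike.star_def, mul_comm ((starRingEnd ℂ) (w i)) (w i),
      Complex.mul_conj']
    simp [← Complex.ofReal_pow]
  obtain ⟨j, -, hj⟩ := Finset.exists_max_image Finset.univ hA.eigenvalues
    ⟨Classical.arbitrary n, Finset.mem_univ _⟩
  refine ⟨j, ?_⟩
  rw [e1, e3]
  calc ∑ i, hA.eigenvalues i * ‖w i‖^2
      ≤ ∑ i, hA.eigenvalues j * ‖w i‖^2 :=
        Finset.sum_le_sum (fun i _ => mul_le_mul_of_nonneg_right (hj i (Finset.mem_univ i))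
          (sq_nonneg _))
    _ = hA.eigenvalues j := by rw [← Finset.mul_sum, e4, mul_one]

variable {N : ℕ} (Φ : Matrix (Fin N) (Fin N) ℂ →ₗ[ℂ] Matrix (Fin N) (Fin N) ℂ)

lemma trace_pres (hΦ : IsCPTP Φ) (ρ : Matrix (Fin N) (Fin N) ℂ) :
    (Φ ρ).trace = ρ.trace := by
  obtain ⟨k, A, hK, hsum⟩ := hΦ
  rw [hK, trace_sum]
  calc ∑ i, (A i * ρ * (A i)ᴴ).trace
      = ∑ i, ((A i)ᴴ * A i * ρ).trace := by
        exact Finset.sum_congr rfl (fun i _ => trace_mul_cycle (A i) ρ ((A i)ᴴ))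
    _ = ((∑ i, (A i)ᴴ * A i) * ρ).trace := by rw [← trace_sum, Finset.sum_mul]
    _ = ρ.trace := by rw [hsum, one_mul]

lemma trace_std (i j : Fin N) :
    (Matrix.single i j (1:ℂ)).trace = if i = j then 1 else 0 := by
  rw [Matrix.trace]
  by_cases h : i = j
  · subst h
    simp [Matrix.diag, Matrix.single]
  · simp only [Matrix.diag, Matrix.single, Matrix.of_apply]
    rw [Finset.sum_eq_zero, if_neg h]
    intro x _
    by_cases h1 : i = x <;> by_cases h2 : j = x <;> simp_all

def testv : Fin N × Fin N → ℂ := fun p => if p.1 = p.2 then ((Real.sqrt N)⁻¹ : ℝ) else 0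

lemma testv_norm (hN : 0 < N) : star (testv (N := N)) ⬝ᵥ testv (N := N) = 1 := by
  rw [dotProduct]
  rw [Fintype.sum_prod_type]
  have : ∀ a b : Fin N, star (testv (N := N) (a, b)) * testv (N := N) (a, b)
      = if a = b then ((N:ℂ))⁻¹ else 0 := by
    intro a b
    by_cases h : a = b
    · simp only [testv, h, if_pos rfl, Pi.star_apply, if_true]
      rw [RCLike.star_def, Complex.conj_ofReal, ← Complex.ofReal_mul,
        ← Real.sqrt_inv, Real.mul_self_sqrt (by positivity)]
      simp [h]
    · simp [testv, h]
  have hNne : (N:ℂ) ≠ 0 := Nat.cast_ne_zero.2 hN.ne'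
  simp only [Pi.star_apply]
  rw [Finset.sum_congr rfl (fun a _ => Finset.sum_congr rfl (fun b _ => this a b))]
  simp [Finset.sum_ite_eq, Finset.card_univ, mul_inv_cancel₀ hNne]

lemma superMatrix_fix (hΦ : IsCPTP Φ) (hN : 0 < N) :
    (superMatrix Φ)ᴴ *ᵥ testv (N := N) = testv (N := N) := by
  funext q
  rw [mulVec]
  rw [dotProduct]
  have : ∀ p : Fin N × Fin N, (superMatrix Φ)ᴴ q p * testv (N := N) p
      = if p.1 = p.2 then
          ((Real.sqrt N)⁻¹ : ℝ) * star (Φ (Matrix.single q.1 q.2 1) p.1 p.2) else 0 := by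
    intro p
    by_cases h : p.1 = p.2
    · simp [testv, h, conjTranspose_apply, superMatrix, mul_comm]
    · simp [testv, h]
  rw [Finset.sum_congr rfl (fun p _ => this p)]
  rw [Fintype.sum_prod_type]
  have h2 : ∀ a : Fin N, (∑ b : Fin N, if a = b then
      ((Real.sqrt N)⁻¹ : ℝ) * star (Φ (Matrix.single q.1 q.2 1) a b) else 0)
      = ((Real.sqrt N)⁻¹ : ℝ) * star (Φ (Matrix.single q.1 q.2 1) a a) := by
    intro a
    simp [Finset.sum_ite_eq]
  rw [Finset.sum_congr rfl (fun a _ => h2 a), ← Finset.mul_sum, ← star_sum]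
  have h3 : ∑ a, Φ (Matrix.single q.1 q.2 1) a a
      = (Φ (Matrix.single q.1 q.2 1)).trace := rfl
  rw [h3, trace_pres Φ hΦ, trace_std]
  simp only [testv]
  by_cases h : q.1 = q.2 <;> simp [h]

lemma quad_one (hΦ : IsCPTP Φ) (hN : 0 < N) :
    (star (testv (N := N)) ⬝ᵥ ((superMatrix Φ * (superMatrix Φ)ᴴ) *ᵥ testv (N := N))).re = 1 := by
  set S := superMatrix Φ
  have h1 : star (testv (N := N)) ᵥ* S = star (testv (N := N)) := by
    calc star (testv (N := N)) ᵥ* S = star (testv (N := N)) ᵥ* (Sᴴ)ᴴ := by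
          rw [conjTranspose_conjTranspose]
      _ = star (Sᴴ *ᵥ testv (N := N)) := (star_mulVec _ _).symm
      _ = star (testv (N := N)) := by rw [superMatrix_fix Φ hΦ hN]
  rw [← mulVec_mulVec, dotProduct_mulVec, h1, superMatrix_fix Φ hΦ hN, testv_norm hN]
  rfl

lemma choi_psd (hΦ : IsCPTP Φ) : (choiMatrix Φ).PosSemidef := by
  obtain ⟨k, A, hK, hsum⟩ := hΦ
  have : choiMatrix Φ = (Matrix.of fun (p : Fin N × Fin N) (i : Fin k) => A i p.1 p.2)
      * (Matrix.of fun (p : Fin N × Fin N) (i : Fin k) => A i p.1 p.2)ᴴ := by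
    ext p q
    rw [choiMatrix, hK, Matrix.mul_apply]
    simp only [Matrix.sum_apply, conjTranspose_apply, Matrix.of_apply]
    apply Finset.sum_congr rfl
    intro i _
    rw [Matrix.mul_apply]
    have : ∀ b, (A i * Matrix.single p.2 q.2 (1:ℂ)) p.1 b * (A i)ᴴ b q.1
        = if q.2 = b then A i p.1 p.2 * star (A i q.1 b) else 0 := by
      intro b
      rw [Matrix.mul_apply, conjTranspose_apply]
      by_cases h : q.2 = b
      · subst h
        rw [if_pos rfl]
        congr 1
        rw [Finset.sum_eq_single p.2]
        · simp [Matrix.single]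
        · intro c _ hc
          simp [Matrix.single, Ne.symm hc]
        · simp
      · rw [if_neg h, Finset.sum_eq_zero, zero_mul]
        intro c _
        simp [Matrix.single, h]
    rw [Finset.sum_congr rfl (fun b _ => this b)]
    simp [Finset.sum_ite_eq]
  rw [this]
  exact Matrix.posSemidef_self_mul_conjTranspose _

lemma choi_trace (hΦ : IsCPTP Φ) : (choiMatrix Φ).trace = (N : ℂ) := by
  rw [Matrix.trace]
  rw [Fintype.sum_prod_type]
  have : ∀ a b : Fin N, (choiMatrix Φ).diag (a, b) = Φ (Matrix.single b b (1:ℂ)) a a :=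
    fun a b => rfl
  rw [Finset.sum_congr rfl (fun a _ => Finset.sum_congr rfl (fun b _ => this a b))]
  rw [Finset.sum_comm]
  have h2 : ∀ b : Fin N, ∑ a, Φ (Matrix.single b b 1) a a = 1 := by
    intro b
    have : ∑ a, Φ (Matrix.single b b (1:ℂ)) a a
        = (Φ (Matrix.single b b (1:ℂ))).trace := rfl
    rw [this, trace_pres Φ hΦ, trace_std]
    simp
  rw [Finset.sum_congr rfl (fun b _ => h2 b)]
  simp

lemma entries_eq :
    ∑ p, ∑ q, ‖choiMatrix Φ p q‖^2 = ∑ p, ∑ q, ‖superMatrix Φ p q‖^2 := by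
  calc ∑ p, ∑ q, ‖choiMatrix Φ p q‖^2
      = ∑ x : (Fin N × Fin N) × (Fin N × Fin N), ‖choiMatrix Φ x.1 x.2‖^2 :=
        (Fintype.sum_prod_type (fun x => ‖choiMatrix Φ x.1 x.2‖^2)).symm
    _ = ∑ x : (Fin N × Fin N) × (Fin N × Fin N), ‖superMatrix Φ x.1 x.2‖^2 := by
        apply Fintype.sum_equiv (Equiv.prodProdProdComm (Fin N) (Fin N) (Fin N) (Fin N))
        intro x
        rfl
    _ = ∑ p, ∑ q, ‖superMatrix Φ p q‖^2 :=
        Fintype.sum_prod_type (fun x => ‖superMatrix Φ x.1 x.2‖^2)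

end ReceiverAux2


theorem receiver_entropy_upper_bound {N : ℕ} (hN : 0 < N)
    (Φ : Matrix (Fin N) (Fin N) ℂ →ₗ[ℂ] Matrix (Fin N) (Fin N) ℂ) (hΦ : IsCPTP Φ) :
    shannonH (singularValues (superMatrix Φ))
        ≤ (((∑ i, singularValues (superMatrix Φ) i) - 1) /
              (∑ i, singularValues (superMatrix Φ) i)) *
            Real.log (((N : ℝ) ^ 2 - 1) / ((∑ i, singularValues (superMatrix Φ) i) - 1))
          + Real.log (∑ i, singularValues (superMatrix Φ) i) ∧
    (((∑ i, singularValues (superMatrix Φ) i) - 1) /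
          (∑ i, singularValues (superMatrix Φ) i)) *
        Real.log (((N : ℝ) ^ 2 - 1) / ((∑ i, singularValues (superMatrix Φ) i) - 1))
      + Real.log (∑ i, singularValues (superMatrix Φ) i) ≤ 2 * Real.log N := by
  classical
  have hFinN : Nonempty (Fin N) := ⟨⟨0, hN⟩⟩
  set S := superMatrix Φ with hSdef
  set σ := singularValues (superMatrix Φ) with hσdef
  have hps : (S * Sᴴ).PosSemidef := Matrix.posSemidef_self_mul_conjTranspose S
  set eig := (Matrix.posSemidef_self_mul_conjTranspose (superMatrix Φ)).1.eigenvalues with heig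
  have heig0 : ∀ i, 0 ≤ eig i :=
    fun i => (Matrix.posSemidef_self_mul_conjTranspose (superMatrix Φ)).eigenvalues_nonneg i
  have hσeig : ∀ i, σ i = Real.sqrt (eig i) := fun i => rfl
  have hσ0 : ∀ i, 0 ≤ σ i := fun i => Real.sqrt_nonneg _
  have hσsq : ∀ i, σ i ^ 2 = eig i := fun i => Real.sq_sqrt (heig0 i)
  -- sum of squared singular values = HS norm squared of S
  have hsumsq : ∑ i, σ i ^ 2 = ∑ p, ∑ q, ‖S p q‖ ^ 2 := by
    have h1 : ((∑ i, eig i : ℝ) : ℂ) = (S * Sᴴ).trace :=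
      ReceiverAux2.sum_eig_eq_trace _
    rw [ReceiverAux2.trace_mul_conjTranspose_self] at h1
    have h2 : ∑ i, eig i = ∑ p, ∑ q, ‖S p q‖ ^ 2 := by exact_mod_cast h1
    rw [← h2]
    exact Finset.sum_congr rfl (fun i _ => hσsq i)
  -- Choi matrix facts
  have hCpsd : (choiMatrix Φ).PosSemidef := ReceiverAux2.choi_psd Φ hΦ
  set ν := hCpsd.1.eigenvalues with hν
  have hν0 : ∀ i, 0 ≤ ν i := fun i => hCpsd.eigenvalues_nonneg i
  have hνsum : ∑ i, ν i = (N : ℝ) := by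
    have h1 : ((∑ i, ν i : ℝ) : ℂ) = (choiMatrix Φ).trace :=
      ReceiverAux2.sum_eig_eq_trace _
    rw [ReceiverAux2.choi_trace Φ hΦ] at h1
    exact_mod_cast h1
  have hνsq : ∑ i, ν i ^ 2 = ∑ p, ∑ q, ‖choiMatrix Φ p q‖ ^ 2 := by
    have h1 : ((∑ i, ν i ^ 2 : ℝ) : ℂ) = (choiMatrix Φ * choiMatrix Φ).trace :=
      ReceiverAux2.sum_eig_sq_eq_trace _
    have h2 : choiMatrix Φ * choiMatrix Φ = choiMatrix Φ * (choiMatrix Φ)ᴴ := by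
      rw [hCpsd.1]
    rw [h2, ReceiverAux2.trace_mul_conjTranspose_self] at h1
    exact_mod_cast h1
  -- sum of squares bound
  have hsq_le : ∑ i, σ i ^ 2 ≤ (N : ℝ) ^ 2 := by
    rw [hsumsq, ← ReceiverAux2.entries_eq, ← hνsq]
    calc ∑ i, ν i ^ 2 ≤ (∑ i, ν i) ^ 2 :=
          Finset.sum_sq_le_sq_sum_of_nonneg (fun i _ => hν0 i)
      _ = (N : ℝ) ^ 2 := by rw [hνsum]
  -- trace norm bound
  have hcard : (Fintype.card (Fin N × Fin N) : ℝ) = (N : ℝ) ^ 2 := by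
    simp [Fintype.card_prod, sq]
  have hΛ_le : ∑ i, σ i ≤ (N : ℝ) ^ 2 := by
    have h1 : (∑ i, σ i) ^ 2 ≤ (Fintype.card (Fin N × Fin N)) * ∑ i, σ i ^ 2 := by
      simpa using sq_sum_le_card_mul_sum_sq (s := Finset.univ) (f := σ)
    have h2 : (∑ i, σ i) ^ 2 ≤ ((N:ℝ)^2) * ((N:ℝ)^2) := by
      calc (∑ i, σ i) ^ 2 ≤ (Fintype.card (Fin N × Fin N)) * ∑ i, σ i ^ 2 := h1
        _ ≤ ((N:ℝ)^2) * ((N:ℝ)^2) := by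
            rw [hcard]
            apply mul_le_mul_of_nonneg_left hsq_le (by positivity)
    have h0 : 0 ≤ ∑ i, σ i := Finset.sum_nonneg (fun i _ => hσ0 i)
    nlinarith [h0, sq_nonneg ((∑ i, σ i) - (N:ℝ)^2), sq_nonneg ((∑ i, σ i) + (N:ℝ)^2)]
  -- there is a singular value ≥ 1
  have hbig : ∃ j, 1 ≤ σ j := by
    obtain ⟨j, hj⟩ := ReceiverAux2.exists_eig_ge hps.1 (ReceiverAux2.testv (N := N))
      (ReceiverAux2.testv_norm hN)
    rw [ReceiverAux2.quad_one Φ hΦ hN] at hj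
    refine ⟨j, ?_⟩
    rw [hσeig]
    calc (1:ℝ) = Real.sqrt 1 := Real.sqrt_one.symm
      _ ≤ Real.sqrt (eig j) := Real.sqrt_le_sqrt hj
  obtain ⟨j, hj⟩ := hbig
  have hΛ1 : 1 ≤ ∑ i, σ i :=
    hj.trans (Finset.single_le_sum (fun i _ => hσ0 i) (Finset.mem_univ j))
  rcases Nat.lt_or_ge N 2 with hN2 | hN2
  · -- N = 1
    interval_cases N
    have hΛle1 : ∑ i, σ i ≤ 1 := by
      calc ∑ i, σ i ≤ ((1:ℕ):ℝ)^2 := hΛ_le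
        _ = 1 := by norm_num
    have hΛeq : ∑ i, σ i = 1 := le_antisymm hΛle1 hΛ1
    have hsum1 : ∑ i, σ i = σ j :=
      Finset.sum_eq_single_of_mem j (Finset.mem_univ j)
        (fun b _ hb => absurd (Subsingleton.elim b j) hb)
    have hσj1 : σ j = 1 := by rw [← hsum1, hΛeq]
    have hsh : shannonH σ = 0 := by
      rw [shannonH, hΛeq]
      simp only [div_one]
      rw [Finset.sum_eq_single_of_mem j (Finset.mem_univ j)
        (fun b _ hb => absurd (Subsingleton.elim b j) hb), hσj1]
      simp
    rw [hsh, hΛeq]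
    norm_num
  · -- N ≥ 2
    have hn2 : (2:ℝ) ≤ (N:ℝ)^2 := by
      have : (2:ℝ) ≤ (N:ℝ) := by exact_mod_cast hN2
      nlinarith
    constructor
    · rw [shannonH]
      exact ReceiverAux.entropy_bound σ hσ0 j hj hcard hn2 hΛ_le
    · calc (((∑ i, σ i) - 1) / (∑ i, σ i)) * Real.log (((N:ℝ)^2 - 1)/((∑ i, σ i) - 1))
            + Real.log (∑ i, σ i)
          ≤ Real.log ((N:ℝ)^2) := ReceiverAux.second_ineq hn2 hΛ1 hΛ_le
        _ = 2 * Real.log N := by rw [Real.log_pow]; norm_num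

end
end

section
/- For any CPTP map Φ on an N-dimensional system, the order-2 Rényi entropies satisfy S_2^map(Φ) + S_2^rec(Φ) ≤ 2 ln(N(N+1)/2). -/
open Matrix
open scoped BigOperators Kronecker ComplexOrder

noncomputable section

-- ===== auxiliary lemmas =====

lemma trace_unitary_conj {n : Type*} [Fintype n] [DecidableEq n]
    (U : Matrix.unitaryGroup n ℂ) (v : n → ℂ) :
    ((U : Matrix n n ℂ) * diagonal v * (star U : Matrix n n ℂ)).trace = ∑ i, v i := by
  rw [Matrix.trace_mul_cycle, Matrix.mem_unitaryGroup_iff'.mp U.2,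
    Matrix.one_mul, Matrix.trace_diagonal]

lemma trace_eq_sum_eig {n : Type*} [Fintype n] [DecidableEq n] {A : Matrix n n ℂ}
    (hA : A.IsHermitian) : A.trace = ∑ i, (hA.eigenvalues i : ℂ) := by
  conv_lhs => rw [hA.spectral_theorem]
  rw [Unitary.conjStarAlgAut_apply, trace_unitary_conj]; rfl

lemma trace_sqrt_eq {n : Type*} [Fintype n] [DecidableEq n] {A : Matrix n n ℂ}
    (hA : A.PosSemidef) : (hA.1.cfc Real.sqrt).trace = ∑ i, ((Real.sqrt (hA.1.eigenvalues i)) : ℂ) := by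
  unfold Matrix.IsHermitian.cfc
  rw [Unitary.conjStarAlgAut_apply, trace_unitary_conj]; rfl

lemma sum_sv_of_psd {n : Type*} [Fintype n] [DecidableEq n] {X : Matrix n n ℂ}
    (hX : X.PosSemidef) : ((∑ i, singularValues X i : ℝ) : ℂ) = X.trace := by
  have hP : (X * Xᴴ).PosSemidef := Matrix.posSemidef_self_mul_conjTranspose X
  have hXP : X = hP.1.cfc Real.sqrt := by
    open scoped MatrixOrder in
    have h := CFC.sqrt_mul_self X hX.nonneg
    rw [CFC.sqrt_eq_real_sqrt _ (by nth_rewrite 2 [← hX.1.eq]; exact hP.nonneg), cfcₙ_eq_cfc] at h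
    rw [← hP.1.cfc_eq, hX.1.eq]
    exact h.symm
  rw [show X.trace = (hP.1.cfc Real.sqrt).trace by rw [← hXP], trace_sqrt_eq hP]
  push_cast
  rfl

lemma sum_sv_sq {n : Type*} [Fintype n] [DecidableEq n] (X : Matrix n n ℂ) :
    ∑ i, (singularValues X i) ^ 2 = (X * Xᴴ).trace.re := by
  have hP : (X * Xᴴ).PosSemidef := Matrix.posSemidef_self_mul_conjTranspose X
  rw [trace_eq_sum_eig hP.1]
  rw [Complex.re_sum]
  refine Finset.sum_congr rfl fun i _ => ?_
  rw [singularValues, Real.sq_sqrt (hP.eigenvalues_nonneg i), Complex.ofReal_re]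

lemma quadform_diag {n : Type*} [Fintype n] [DecidableEq n]
    (U : Matrix n n ℂ) (d : n → ℂ) (v : n → ℂ) :
    star v ⬝ᵥ ((U * diagonal d * Uᴴ) *ᵥ v)
      = ∑ i, d i * Complex.normSq ((Uᴴ *ᵥ v) i) := by
  have h1 : (U * diagonal d * Uᴴ) *ᵥ v = U *ᵥ (diagonal d *ᵥ (Uᴴ *ᵥ v)) := by
    rw [Matrix.mulVec_mulVec, Matrix.mulVec_mulVec]
  rw [h1, Matrix.dotProduct_mulVec]
  have h2 : star v ᵥ* U = star (Uᴴ *ᵥ v) := by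
    rw [Matrix.star_mulVec, Matrix.conjTranspose_conjTranspose]
  rw [h2]
  set w := Uᴴ *ᵥ v
  rw [dotProduct]
  refine Finset.sum_congr rfl fun i _ => ?_
  rw [Matrix.mulVec_diagonal]
  simp only [Pi.star_apply, Complex.star_def]
  rw [mul_comm ((starRingEnd ℂ) (w i)), mul_assoc, Complex.mul_conj]

lemma exists_eig_ge_one {n : Type*} [Fintype n] [DecidableEq n] {M : Matrix n n ℂ}
    (hM : M.IsHermitian) (v : n → ℂ)
    (hv : star v ⬝ᵥ (M *ᵥ v) = star v ⬝ᵥ v) (hv0 : star v ⬝ᵥ v ≠ 0) :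
    ∃ i, 1 ≤ hM.eigenvalues i := by
  by_contra hc
  push_neg at hc
  set U : Matrix n n ℂ := (hM.eigenvectorUnitary : Matrix n n ℂ) with hU
  set w := Uᴴ *ᵥ v with hw
  have hspec : star v ⬝ᵥ (M *ᵥ v)
      = ∑ i, (hM.eigenvalues i : ℂ) * Complex.normSq (w i) := by
    conv_lhs => rw [hM.spectral_theorem]
    rw [Unitary.conjStarAlgAut_apply]
    rw [show (star U : Matrix n n ℂ) = Uᴴ from rfl]
    rw [quadform_diag]
    rfl
  have hone : star v ⬝ᵥ v = ∑ i, (Complex.normSq (w i) : ℂ) := by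
    have hid : (1 : Matrix n n ℂ) = U * diagonal (fun _ => (1:ℂ)) * Uᴴ := by
      rw [diagonal_one, Matrix.mul_one, ← Matrix.star_eq_conjTranspose,
        Matrix.mem_unitaryGroup_iff.mp hM.eigenvectorUnitary.2]
    calc star v ⬝ᵥ v = star v ⬝ᵥ ((1 : Matrix n n ℂ) *ᵥ v) := by rw [Matrix.one_mulVec]
    _ = ∑ i, (Complex.normSq (w i) : ℂ) := by
        rw [hid, quadform_diag]; simp; rfl
  have hreal : ∑ i, hM.eigenvalues i * Complex.normSq (w i)
      = ∑ i, Complex.normSq (w i) := by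
    have := congrArg Complex.re (hspec.symm.trans (hv.trans hone))
    simpa [Complex.re_sum, ← Complex.ofReal_mul] using this
  have hnspos : 0 < ∑ i, Complex.normSq (w i) := by
    rcases lt_or_eq_of_le (Finset.sum_nonneg fun i _ => Complex.normSq_nonneg (w i)) with h | h
    · exact h
    · exfalso
      apply hv0
      rw [hone, show ∑ i, ((Complex.normSq (w i) : ℂ))
          = ((∑ i, Complex.normSq (w i) : ℝ) : ℂ) by push_cast; ring, ← h]
      norm_num
  obtain ⟨i₀, -, hi₀⟩ := Finset.exists_lt_of_sum_lt
    (show ∑ _i : n, (0:ℝ) < ∑ i, Complex.normSq (w i) by simpa using hnspos)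
  have hstrict : ∑ i, hM.eigenvalues i * Complex.normSq (w i)
      < ∑ i, Complex.normSq (w i) := by
    refine Finset.sum_lt_sum (fun i _ => ?_) ⟨i₀, Finset.mem_univ i₀, ?_⟩
    · calc hM.eigenvalues i * Complex.normSq (w i)
          ≤ 1 * Complex.normSq (w i) :=
            mul_le_mul_of_nonneg_right (le_of_lt (hc i)) (Complex.normSq_nonneg _)
      _ = Complex.normSq (w i) := one_mul _
    · calc hM.eigenvalues i₀ * Complex.normSq (w i₀)
          < 1 * Complex.normSq (w i₀) := mul_lt_mul_of_pos_right (hc i₀) hi₀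
      _ = Complex.normSq (w i₀) := one_mul _
  exact absurd hreal (ne_of_lt hstrict)

lemma mul_std_mul_apply {N : ℕ} (A B : Matrix (Fin N) (Fin N) ℂ) (a b c d : Fin N) :
    (A * Matrix.single a b (1:ℂ) * Bᴴ) c d = A c a * star (B d b) := by
  simp [Matrix.mul_apply, Matrix.single, Matrix.conjTranspose_apply,
    ite_and, mul_ite, ite_mul, Finset.sum_ite_eq, Finset.sum_ite_eq', mul_comm]

lemma choi_apply {N : ℕ} {Φ : Matrix (Fin N) (Fin N) ℂ →ₗ[ℂ] Matrix (Fin N) (Fin N) ℂ}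
    {k : ℕ} {A : Fin k → Matrix (Fin N) (Fin N) ℂ}
    (hmap : ∀ ρ, Φ ρ = ∑ i, A i * ρ * (A i)ᴴ) (p q : Fin N × Fin N) :
    choiMatrix Φ p q = ∑ i, A i p.1 p.2 * star (A i q.1 q.2) := by
  rw [choiMatrix, hmap]
  rw [Matrix.sum_apply]
  exact Finset.sum_congr rfl fun i _ => mul_std_mul_apply _ _ _ _ _ _

lemma choi_psd {N : ℕ} {Φ : Matrix (Fin N) (Fin N) ℂ →ₗ[ℂ] Matrix (Fin N) (Fin N) ℂ}
    {k : ℕ} {A : Fin k → Matrix (Fin N) (Fin N) ℂ}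
    (hmap : ∀ ρ, Φ ρ = ∑ i, A i * ρ * (A i)ᴴ) :
    (choiMatrix Φ).PosSemidef := by
  have hfor : choiMatrix Φ
      = (Matrix.of fun (i : Fin k) (p : Fin N × Fin N) => star (A i p.1 p.2))ᴴ
      * (Matrix.of fun (i : Fin k) (p : Fin N × Fin N) => star (A i p.1 p.2)) := by
    ext p q
    rw [choi_apply hmap, Matrix.mul_apply]
    refine Finset.sum_congr rfl fun i _ => ?_
    simp [Matrix.conjTranspose_apply]
  rw [hfor]
  exact Matrix.posSemidef_conjTranspose_mul_self _

lemma choi_trace {N : ℕ} {Φ : Matrix (Fin N) (Fin N) ℂ →ₗ[ℂ] Matrix (Fin N) (Fin N) ℂ}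
    {k : ℕ} {A : Fin k → Matrix (Fin N) (Fin N) ℂ}
    (hmap : ∀ ρ, Φ ρ = ∑ i, A i * ρ * (A i)ᴴ)
    (htp : ∑ i, (A i)ᴴ * A i = 1) :
    (choiMatrix Φ).trace = (N : ℂ) := by
  have h1 : (∑ i, (A i)ᴴ * A i).trace = (N : ℂ) := by
    rw [htp, Matrix.trace_one]; simp
  calc (choiMatrix Φ).trace
      = ∑ p1 : Fin N, ∑ p2 : Fin N, ∑ i, A i p1 p2 * star (A i p1 p2) := by
        simp only [Matrix.trace, Matrix.diag]
        rw [Fintype.sum_prod_type]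
        exact Finset.sum_congr rfl fun p1 _ => Finset.sum_congr rfl fun p2 _ =>
          choi_apply hmap (p1, p2) (p1, p2)
    _ = ∑ i, ∑ p1 : Fin N, ∑ p2 : Fin N, A i p1 p2 * star (A i p1 p2) := by
        rw [show (∑ p1 : Fin N, ∑ p2 : Fin N, ∑ i, A i p1 p2 * star (A i p1 p2))
            = ∑ p1 : Fin N, ∑ i, ∑ p2 : Fin N, A i p1 p2 * star (A i p1 p2) from
          Finset.sum_congr rfl fun p1 _ => Finset.sum_comm, Finset.sum_comm]
    _ = (∑ i, (A i)ᴴ * A i).trace := by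
        rw [Matrix.trace_sum]
        refine Finset.sum_congr rfl fun i _ => ?_
        simp only [Matrix.trace, Matrix.diag, Matrix.mul_apply, Matrix.conjTranspose_apply]
        rw [Finset.sum_comm]
        exact Finset.sum_congr rfl fun p1 _ => Finset.sum_congr rfl fun p2 _ => mul_comm _ _
    _ = (N : ℂ) := h1

lemma trace_mul_conjTranspose_eq {m : Type*} [Fintype m] [DecidableEq m] (M : Matrix m m ℂ) :
    (M * Mᴴ).trace = ∑ p : m, ∑ q : m, M p q * star (M p q) := by
  simp [Matrix.trace, Matrix.diag, Matrix.mul_apply, Matrix.conjTranspose_apply]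

lemma trace_DD_eq_SS {N : ℕ} (Φ : Matrix (Fin N) (Fin N) ℂ →ₗ[ℂ] Matrix (Fin N) (Fin N) ℂ) :
    (choiMatrix Φ * (choiMatrix Φ)ᴴ).trace = (superMatrix Φ * (superMatrix Φ)ᴴ).trace := by
  rw [trace_mul_conjTranspose_eq, trace_mul_conjTranspose_eq]
  rw [← Finset.sum_product', ← Finset.sum_product']
  refine Finset.sum_nbij' (fun x => ((x.1.1, x.2.1), (x.1.2, x.2.2)))
    (fun x => ((x.1.1, x.2.1), (x.1.2, x.2.2))) ?_ ?_ ?_ ?_ ?_ <;>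
    simp [choiMatrix, superMatrix]

lemma super_fixed_vec {N : ℕ} {Φ : Matrix (Fin N) (Fin N) ℂ →ₗ[ℂ] Matrix (Fin N) (Fin N) ℂ}
    {k : ℕ} {A : Fin k → Matrix (Fin N) (Fin N) ℂ}
    (hmap : ∀ ρ, Φ ρ = ∑ i, A i * ρ * (A i)ᴴ)
    (htp : ∑ i, (A i)ᴴ * A i = 1) :
    (superMatrix Φ)ᴴ *ᵥ (fun p : Fin N × Fin N => if p.1 = p.2 then (1:ℂ) else 0)
      = (fun p : Fin N × Fin N => if p.1 = p.2 then (1:ℂ) else 0) := by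
  have htr : ∀ ρ : Matrix (Fin N) (Fin N) ℂ, (Φ ρ).trace = ρ.trace := by
    intro ρ
    rw [hmap, Matrix.trace_sum]
    calc ∑ i, (A i * ρ * (A i)ᴴ).trace = ∑ i, ((A i)ᴴ * A i * ρ).trace := by
          refine Finset.sum_congr rfl fun i _ => ?_
          rw [Matrix.trace_mul_cycle]
    _ = ((∑ i, (A i)ᴴ * A i) * ρ).trace := by rw [Finset.sum_mul, Matrix.trace_sum]
    _ = ρ.trace := by rw [htp, Matrix.one_mul]
  funext q
  rw [Matrix.mulVec]
  calc ∑ p : Fin N × Fin N, (superMatrix Φ)ᴴ q p * (if p.1 = p.2 then (1:ℂ) else 0)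
      = ∑ p1 : Fin N, (superMatrix Φ)ᴴ q (p1, p1) := by
        rw [Fintype.sum_prod_type]
        refine Finset.sum_congr rfl fun p1 _ => ?_
        simp
    _ = star ((Φ (Matrix.single q.1 q.2 1)).trace) := by
        simp only [Matrix.conjTranspose_apply, superMatrix, Matrix.trace, Matrix.diag]
        rw [star_sum]
    _ = if q.1 = q.2 then (1:ℂ) else 0 := by
        rw [htr]
        rcases eq_or_ne q.1 q.2 with h | h
        · rw [h, Matrix.trace_single_eq_same]; simp [h]
        · rw [Matrix.trace_single_eq_of_ne (h := h)]; simp [h]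

lemma key_sum_ineq {ι : Type*} [Fintype ι] [DecidableEq ι] (b : ι → ℝ) (hb : ∀ i, 0 ≤ b i)
    (i₀ : ι) (h1 : 1 ≤ b i₀) (N : ℕ) (hN : 0 < N) (hcard : Fintype.card ι = N^2) :
    ∑ i, b i ≤ ((N : ℝ) + 1)/2 * ∑ i, (b i)^2 := by
  classical
  set s := ∑ i ∈ Finset.univ.erase i₀, b i with hs_def
  set Q := ∑ i ∈ Finset.univ.erase i₀, (b i)^2 with hQ_def
  have hB : ∑ i, b i = b i₀ + s := by
    rw [hs_def, Finset.add_sum_erase _ _ (Finset.mem_univ i₀)]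
  have hT : ∑ i, (b i)^2 = (b i₀)^2 + Q := by
    rw [hQ_def, Finset.add_sum_erase _ (fun i => b i ^ 2) (Finset.mem_univ i₀)]
  have hs : 0 ≤ s := Finset.sum_nonneg fun i _ => hb i
  have hQ : 0 ≤ Q := Finset.sum_nonneg fun i _ => sq_nonneg _
  have hcard' : (Finset.univ.erase i₀).card = N^2 - 1 := by
    rw [Finset.card_erase_of_mem (Finset.mem_univ i₀), Finset.card_univ, hcard]
  have hcs : s^2 ≤ ((N:ℝ)^2 - 1) * Q := by
    have := sq_sum_le_card_mul_sum_sq (s := Finset.univ.erase i₀) (f := b)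
    rw [hcard'] at this
    have hNcast : ((N^2 - 1 : ℕ) : ℝ) = (N:ℝ)^2 - 1 := by
      have : 1 ≤ N^2 := Nat.one_le_iff_ne_zero.mpr (by positivity)
      push_cast [this]
      ring
    rw [hs_def, hQ_def]
    calc s^2 ≤ ((N^2 - 1 : ℕ) : ℝ) * Q := by exact_mod_cast this
    _ = ((N:ℝ)^2 - 1) * Q := by rw [hNcast]
  rw [hB, hT]
  rcases Nat.lt_or_ge N 2 with h2 | h2
  · interval_cases N
    norm_num at hcs
    have hs0 : s = 0 := by nlinarith
    rw [hs0]
    nlinarith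
  · have hn : (2:ℝ) ≤ N := by exact_mod_cast h2
    set n := (N:ℝ)
    set c := b i₀
    nlinarith [sq_nonneg (s - n + 1),
      mul_nonneg (mul_nonneg (by linarith : (0:ℝ) ≤ n - 1) (by linarith : (0:ℝ) ≤ c - 1))
        (by nlinarith : (0:ℝ) ≤ (n+1)*c + (n-1)),
      mul_nonneg (by linarith : (0:ℝ) ≤ n + 1) (sub_nonneg.2 hcs), sq_nonneg (s - (n-1))]

theorem collision_entropy_sum_upper_bound {N : ℕ} (hN : 0 < N)
    (Φ : Matrix (Fin N) (Fin N) ℂ →ₗ[ℂ] Matrix (Fin N) (Fin N) ℂ) (hΦ : IsCPTP Φ) :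
    renyiH 2 (singularValues (choiMatrix Φ)) + renyiH 2 (singularValues (superMatrix Φ))
      ≤ 2 * Real.log ((N : ℝ) * (N + 1) / 2) := by
  obtain ⟨k, A, hmap, htp⟩ := hΦ
  set D := choiMatrix Φ with hD
  set S := superMatrix Φ with hS
  set a := singularValues D with ha
  set b := singularValues S with hb
  -- basic facts
  have ha_nonneg : ∀ i, 0 ≤ a i := fun i => Real.sqrt_nonneg _
  have hb_nonneg : ∀ i, 0 ≤ b i := fun i => Real.sqrt_nonneg _
  have ha_sum : ∑ i, a i = (N : ℝ) := by
    have := sum_sv_of_psd (choi_psd hmap)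
    rw [choi_trace hmap htp] at this
    exact_mod_cast this
  have hT_eq : ∑ i, (a i)^2 = ∑ i, (b i)^2 := by
    rw [sum_sv_sq, sum_sv_sq, trace_DD_eq_SS]
  -- existence of a singular value of S that is ≥ 1
  set v : Fin N × Fin N → ℂ := fun p => if p.1 = p.2 then (1:ℂ) else 0 with hv_def
  have hSv : Sᴴ *ᵥ v = v := super_fixed_vec hmap htp
  have hvv : star v ⬝ᵥ v = (N : ℂ) := by
    rw [dotProduct, Fintype.sum_prod_type]
    simp [hv_def]
  have hvv0 : star v ⬝ᵥ v ≠ 0 := by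
    rw [hvv]
    exact_mod_cast Nat.cast_ne_zero.mpr (Nat.pos_iff_ne_zero.mp hN)
  have hray : star v ⬝ᵥ ((S * Sᴴ) *ᵥ v) = star v ⬝ᵥ v := by
    rw [← Matrix.mulVec_mulVec, hSv, Matrix.dotProduct_mulVec,
      show star v ᵥ* S = star (Sᴴ *ᵥ v) by
        rw [Matrix.star_mulVec, Matrix.conjTranspose_conjTranspose],
      hSv]
  obtain ⟨i₀, hi₀⟩ := exists_eig_ge_one
    (Matrix.posSemidef_self_mul_conjTranspose S).1 v hray hvv0
  have hbi₀ : 1 ≤ b i₀ := by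
    rw [hb, singularValues]
    exact Real.one_le_sqrt.mpr hi₀
  -- main quantities
  set B := ∑ i, b i with hB_def
  set T := ∑ i, (b i)^2 with hT_def
  have hT1 : 1 ≤ T := by
    calc (1:ℝ) ≤ (b i₀)^2 := by nlinarith
    _ ≤ T := Finset.single_le_sum (fun i _ => sq_nonneg (b i)) (Finset.mem_univ i₀)
  have hTpos : 0 < T := lt_of_lt_of_le one_pos hT1
  have hBpos : 0 < B :=
    lt_of_lt_of_le one_pos
      (le_trans hbi₀ (Finset.single_le_sum (fun i _ => hb_nonneg i) (Finset.mem_univ i₀)))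
  have hNpos : 0 < (N:ℝ) := by exact_mod_cast hN
  have hkey : B ≤ ((N:ℝ) + 1)/2 * T := by
    rw [hB_def, hT_def]
    exact key_sum_ineq b hb_nonneg i₀ hbi₀ N hN (by simp [pow_two])
  -- rewrite the Rényi entropies
  have hra : renyiH 2 a = Real.log ((N:ℝ)^2 / T) := by
    rw [renyiH]
    have hsum : ∑ i, (a i / ∑ j, a j) ^ (2:ℝ) = T / (N:ℝ)^2 := by
      rw [ha_sum]
      simp_rw [Real.rpow_two, div_pow, ← Finset.sum_div]
      rw [← hT_eq]
    rw [hsum]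
    rw [show (1:ℝ)/(1-2) = -1 by norm_num]
    rw [neg_one_mul, ← Real.log_inv]
    congr 1
    field_simp
  have hrb : renyiH 2 b = Real.log (B^2 / T) := by
    rw [renyiH]
    have hsum : ∑ i, (b i / ∑ j, b j) ^ (2:ℝ) = T / B^2 := by
      simp_rw [Real.rpow_two, div_pow, ← Finset.sum_div]
      rfl
    rw [hsum]
    rw [show (1:ℝ)/(1-2) = -1 by norm_num]
    rw [neg_one_mul, ← Real.log_inv]
    congr 1
    field_simp
  rw [hra, hrb]
  have hKpos : 0 < (N : ℝ) * ((N:ℝ) + 1) / 2 := by positivity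
  have hxpos : 0 < (N:ℝ) * B / T := div_pos (mul_pos hNpos hBpos) hTpos
  calc Real.log ((N:ℝ)^2 / T) + Real.log (B^2 / T)
      = Real.log (((N:ℝ) * B / T)^2) := by
        rw [← Real.log_mul (ne_of_gt (div_pos (pow_pos hNpos 2) hTpos))
          (ne_of_gt (div_pos (pow_pos hBpos 2) hTpos))]
        congr 1
        field_simp
    _ = 2 * Real.log ((N:ℝ) * B / T) := by
        rw [Real.log_pow]
        norm_num
    _ ≤ 2 * Real.log ((N : ℝ) * ((N:ℝ) + 1) / 2) := by
        have hle : (N:ℝ) * B / T ≤ (N : ℝ) * ((N:ℝ) + 1) / 2 := by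
          rw [div_le_iff₀ hTpos]
          calc (N:ℝ) * B ≤ (N:ℝ) * (((N:ℝ) + 1)/2 * T) :=
            mul_le_mul_of_nonneg_left hkey (le_of_lt hNpos)
          _ = (N : ℝ) * ((N:ℝ) + 1) / 2 * T := by ring
        have := Real.log_le_log hxpos hle
        linarith

end
end
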